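/- Let V and W be symmetric n×n real matrices, α ≥ 4 a real number, f ≤ 0 a real number, w = tr(W), and suppose W is positive semidefinite of rank at most one. Let ξ be a unit eigenvector of αV + W with eigenvalue λ ≥ 0. Then the quantity H = α(1−f) w ξᵀVξ + 2(1−f) w ξᵀWξ + 2|(V + fW)ξ|² satisfies H ≥ 2λ²/α². -/
import Mathlib


open Matrix

/-- Key algebraic inequality in the Bernstein argument: with `W = v vᵀ` rank one
PSD, `w = tr W`, `f ≤ 0`, `α ≥ 4`, and `ξ` a unit eigenvector of `αV + W` with
eigenvalue `λ ≥ 0`, the quantity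
`H = α(1−f)w ξᵀVξ + 2(1−f)w ξᵀWξ + 2|(V + fW)ξ|²` satisfies `H ≥ 2λ²/α²`. -/
theorem stmt_8 (n : ℕ) (V W : Matrix (Fin n) (Fin n) ℝ)
    (hV : V.IsSymm) (hWsymm : W.IsSymm)
    (v : Fin n → ℝ) (hW : ∀ i j, W i j = v i * v j)
    (α f lam : ℝ) (hα : 4 ≤ α) (hf : f ≤ 0) (hlam : 0 ≤ lam)
    (ξ : Fin n → ℝ) (hξ : ∑ i, ξ i ^ 2 = 1)
    (heig : (α • V + W).mulVec ξ = lam • ξ)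
    (w : ℝ) (hw : w = W.trace)
    (H : ℝ)
    (hH : H = α * (1 - f) * w * (ξ ⬝ᵥ V.mulVec ξ)
        + 2 * (1 - f) * w * (ξ ⬝ᵥ W.mulVec ξ)
        + 2 * ∑ k, ((V + f • W).mulVec ξ k) ^ 2) :
    H ≥ 2 * lam ^ 2 / α ^ 2 := by
  have hα0 : (0:ℝ) < α := by linarith
  set s : ℝ := ∑ i, v i * ξ i with hs
  -- W.mulVec ξ componentwise
  have hWv : ∀ i, W.mulVec ξ i = v i * s := by
    intro i
    simp only [Matrix.mulVec, dotProduct, hW, hs, Finset.mul_sum]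
    exact Finset.sum_congr rfl fun j _ => by ring
  -- trace
  have hw' : w = ∑ i, v i ^ 2 := by
    rw [hw, Matrix.trace]
    simp [Matrix.diag, hW, sq]
  have hw0 : 0 ≤ w := by
    rw [hw']; positivity
  -- eigen equation componentwise
  have heig' : ∀ i, α * V.mulVec ξ i + v i * s = lam * ξ i := by
    intro i
    have h := congrFun heig i
    simp only [Matrix.add_mulVec, Matrix.smul_mulVec, Pi.add_apply, Pi.smul_apply,
      smul_eq_mul] at h
    rw [hWv i] at h
    exact h
  -- quadratic forms
  have hWq : ξ ⬝ᵥ W.mulVec ξ = s ^ 2 := by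
    simp only [dotProduct, hWv]
    rw [show ∑ i, ξ i * (v i * s) = (∑ i, v i * ξ i) * s by
      rw [Finset.sum_mul]; exact Finset.sum_congr rfl fun i _ => by ring]
    rw [← hs]; ring
  have hVq : α * (ξ ⬝ᵥ V.mulVec ξ) = lam - s ^ 2 := by
    have : α * (ξ ⬝ᵥ V.mulVec ξ) = ∑ i, ξ i * (α * V.mulVec ξ i) := by
      simp only [dotProduct, Finset.mul_sum]
      exact Finset.sum_congr rfl fun i _ => by ring
    rw [this]
    have : ∑ i, ξ i * (α * V.mulVec ξ i) = ∑ i, (lam * ξ i ^ 2 - s * (v i * ξ i)) := by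
      refine Finset.sum_congr rfl fun i _ => ?_
      linear_combination ξ i * heig' i
    rw [this, Finset.sum_sub_distrib, ← Finset.mul_sum, ← Finset.mul_sum, hξ, ← hs]
    ring
  -- the squared norm term
  have hMk : ∀ k, α * (V + f • W).mulVec ξ k = lam * ξ k + (f * α - 1) * (v k * s) := by
    intro k
    have h := heig' k
    have h2 : (V + f • W).mulVec ξ k = V.mulVec ξ k + f * (v k * s) := by
      simp only [Matrix.add_mulVec, Matrix.smul_mulVec, Pi.add_apply, Pi.smul_apply,
        smul_eq_mul, hWv]
    rw [h2]; linarith [h]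
  have hsq : α ^ 2 * ∑ k, ((V + f • W).mulVec ξ k) ^ 2
      = lam ^ 2 + 2 * lam * (f * α - 1) * s ^ 2 + (f * α - 1) ^ 2 * s ^ 2 * w := by
    have h1 : α ^ 2 * ∑ k, ((V + f • W).mulVec ξ k) ^ 2
        = ∑ k, (lam * ξ k + (f * α - 1) * (v k * s)) ^ 2 := by
      rw [Finset.mul_sum]
      refine Finset.sum_congr rfl fun k _ => ?_
      rw [← hMk k]; ring
    rw [h1]
    have h2 : ∀ k, (lam * ξ k + (f * α - 1) * (v k * s)) ^ 2
        = lam ^ 2 * ξ k ^ 2 + (2 * lam * (f * α - 1) * s) * (v k * ξ k)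
          + ((f * α - 1) ^ 2 * s ^ 2) * v k ^ 2 := fun k => by ring
    simp only [h2]
    rw [Finset.sum_add_distrib, Finset.sum_add_distrib, ← Finset.mul_sum, ← Finset.mul_sum,
      ← Finset.mul_sum, hξ, ← hs, ← hw']
    ring
  -- Cauchy-Schwarz
  have hcs : s ^ 2 ≤ w := by
    have h := Finset.sum_mul_sq_le_sq_mul_sq Finset.univ v ξ
    rw [← hs, hξ, mul_one, ← hw'] at h
    exact h
  -- final inequality scaled by α^2
  have hkey : α ^ 2 * H ≥ 2 * lam ^ 2 := by
    have hHα : α ^ 2 * H = α ^ 2 * (1 - f) * w * (lam - s ^ 2) + 2 * α ^ 2 * (1 - f) * w * s ^ 2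
        + 2 * (lam ^ 2 + 2 * lam * (f * α - 1) * s ^ 2 + (f * α - 1) ^ 2 * s ^ 2 * w) := by
      rw [hH]
      rw [show α ^ 2 * (α * (1 - f) * w * (ξ ⬝ᵥ V.mulVec ξ)
          + 2 * (1 - f) * w * (ξ ⬝ᵥ W.mulVec ξ) + 2 * ∑ k, ((V + f • W).mulVec ξ k) ^ 2)
        = α ^ 2 * (1 - f) * w * (α * (ξ ⬝ᵥ V.mulVec ξ)) + 2 * α ^ 2 * (1 - f) * w * (ξ ⬝ᵥ W.mulVec ξ)
          + 2 * (α ^ 2 * ∑ k, ((V + f • W).mulVec ξ k) ^ 2) by ring]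
      rw [hVq, hWq, hsq]
    have h16 : (16:ℝ) ≤ α ^ 2 := by nlinarith
    have hfa : 0 ≤ (-f) * (α * (α - 4)) :=
      mul_nonneg (neg_nonneg.mpr hf) (mul_nonneg hα0.le (by linarith))
    have h1 : 0 ≤ α ^ 2 * (1 - f) - 4 * (1 - f * α) := by nlinarith [h16, hfa]
    have h2 : 0 ≤ lam * (w - s ^ 2) := mul_nonneg hlam (by linarith)
    have h3 : 0 ≤ lam * s ^ 2 := mul_nonneg hlam (sq_nonneg s)
    have h5 : 0 ≤ (α ^ 2 * (1 - f) - 4 * (1 - f * α)) * (lam * s ^ 2) := mul_nonneg h1 h3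
    have h6 : 0 ≤ α ^ 2 * (1 - f) * (lam * (w - s ^ 2)) :=
      mul_nonneg (by nlinarith) h2
    have h7 : 0 ≤ (f * α - 1) ^ 2 * s ^ 2 * w := by positivity
    have h8 : 0 ≤ α ^ 2 * (1 - f) * w * s ^ 2 :=
      mul_nonneg (mul_nonneg (mul_nonneg (by positivity) (by linarith)) hw0) (sq_nonneg s)
    linarith [h5, h6, h7, h8]
  rw [ge_iff_le, div_le_iff₀ (by positivity : (0:ℝ) < α ^ 2)]
  linarith [hkey]
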